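/- Let $A \in \mathbb{Q}(p,q)$ and let $m \geq n \geq 0$ be integers. Suppose that $A \cdot \binom{m+t}{n}_q \in \mathbb{Q}[p,p^{-1},q,q^{-1}]$ for all $t = 1, \ldots, n+1$, where $\binom{\cdot}{\cdot}_q$ is the balanced quantum binomial coefficient. Then $A \in \mathbb{Q}[p,p^{-1},q,q^{-1}]$. -/
import Mathlib

noncomputable section

open Finset

/-- The field `ℚ(p,q)` of rational functions in two variables. -/
abbrev Kpq : Type := FractionRing (MvPolynomial (Fin 2) ℚ)

/-- The variable `p`. -/
def pv : Kpq := algebraMap (MvPolynomial (Fin 2) ℚ) Kpq (MvPolynomial.X 0)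

/-- The variable `q`. -/
def qv : Kpq := algebraMap (MvPolynomial (Fin 2) ℚ) Kpq (MvPolynomial.X 1)

/-- The Laurent polynomial subring `𝒜 = ℚ[p,p⁻¹,q,q⁻¹] ⊆ ℚ(p,q)`. -/
def LaurentA : Subalgebra ℚ Kpq :=
  Algebra.adjoin ℚ ({pv, pv⁻¹, qv, qv⁻¹} : Set Kpq)

/-- The balanced quantum integer `[l] = q^{l-1} + q^{l-3} + ⋯ + q^{1-l}
  (= (q^l - q^{-l})/(q - q^{-1}))`. -/
def qInt (l : ℕ) : Kpq := ∑ k ∈ Finset.range l, qv ^ ((l : ℤ) - 1 - 2 * k)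

/-- The quantum factorial `[n]!`. -/
def qFact (n : ℕ) : Kpq := ∏ l ∈ Finset.range n, qInt (l + 1)

/-- The balanced quantum binomial coefficient `[m choose n] = [m][m-1]⋯[m-n+1]/[n]!`. -/
def qBinom (m n : ℕ) : Kpq := (∏ k ∈ Finset.range n, qInt (m - k)) / qFact n

lemma qv_ne_zero : qv ≠ 0 := by
  simp only [qv, ne_eq, map_eq_zero_iff _ (IsFractionRing.injective (MvPolynomial (Fin 2) ℚ) Kpq)]
  exact MvPolynomial.X_ne_zero 1

lemma qv_mem : qv ∈ LaurentA := Algebra.subset_adjoin (by simp)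

lemma qv_inv_mem : qv⁻¹ ∈ LaurentA := Algebra.subset_adjoin (by simp)

lemma qv_zpow_mem (z : ℤ) : qv ^ z ∈ LaurentA := by
  cases z with
  | ofNat k => rw [Int.ofNat_eq_natCast, zpow_natCast]; exact pow_mem qv_mem k
  | negSucc k => rw [zpow_negSucc, ← inv_pow]; exact pow_mem qv_inv_mem (k+1)

/-- `[a+b] = q^b [a] + q^{-a} [b]`. -/
lemma qInt_add (a b : ℕ) :
    qInt (a + b) = qv ^ (b : ℤ) * qInt a + qv ^ (-(a : ℤ)) * qInt b := by
  unfold qInt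
  rw [Finset.sum_range_add, Finset.mul_sum, Finset.mul_sum]
  congr 1
  · refine Finset.sum_congr rfl fun k hk => ?_
    rw [← zpow_add₀ qv_ne_zero]
    congr 1
    push_cast
    ring
  · refine Finset.sum_congr rfl fun k hk => ?_
    rw [← zpow_add₀ qv_ne_zero]
    congr 1
    push_cast
    ring

lemma qInt_ne_zero (N : ℕ) (hN : 1 ≤ N) : qInt N ≠ 0 := by
  have key : qv ^ ((N : ℤ) - 1) * qInt N =
      algebraMap (MvPolynomial (Fin 2) ℚ) Kpq
        (∑ k ∈ Finset.range N, (MvPolynomial.X 1) ^ (2 * (N - 1 - k))) := by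
    unfold qInt
    rw [Finset.mul_sum, map_sum]
    refine Finset.sum_congr rfl fun k hk => ?_
    rw [map_pow, ← qv, ← zpow_natCast qv, ← zpow_add₀ qv_ne_zero]
    congr 1
    have hk' : k < N := Finset.mem_range.mp hk
    have : ((N - 1 - k : ℕ) : ℤ) = (N : ℤ) - 1 - k := by omega
    omega
  have hpoly : (∑ k ∈ Finset.range N, (MvPolynomial.X 1 : MvPolynomial (Fin 2) ℚ)
      ^ (2 * (N - 1 - k))) ≠ 0 := by
    intro hc
    have := congrArg (MvPolynomial.eval (fun _ => (1 : ℚ))) hc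
    simp [Finset.sum_congr] at this
    omega
  intro hc
  rw [hc, mul_zero] at key
  exact hpoly ((map_eq_zero_iff _ (IsFractionRing.injective (MvPolynomial (Fin 2) ℚ) Kpq)).mp
    key.symm)

lemma qFact_ne_zero (n : ℕ) : qFact n ≠ 0 := by
  unfold qFact
  exact Finset.prod_ne_zero_iff.mpr fun l _ => qInt_ne_zero (l + 1) (Nat.le_add_left 1 l)

/-- Balanced Pascal identity. -/
lemma qBinom_pascal (M N : ℕ) (h : N ≤ M) :
    qBinom (M + 1) (N + 1) =
      qv ^ (-(N + 1 : ℤ)) * qBinom M (N + 1) + qv ^ ((M : ℤ) - N) * qBinom M N := by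
  have hP1 : (∏ k ∈ Finset.range (N + 1), qInt (M + 1 - k)) =
      (∏ k ∈ Finset.range N, qInt (M - k)) * qInt (M + 1) := by
    rw [Finset.prod_range_succ']
    simp [Nat.succ_sub_succ]
  have hP2 : (∏ k ∈ Finset.range (N + 1), qInt (M - k)) =
      (∏ k ∈ Finset.range N, qInt (M - k)) * qInt (M - N) := Finset.prod_range_succ _ _
  have hqI : qInt (M + 1) = qv ^ ((M : ℤ) - N) * qInt (N + 1) + qv ^ (-(N + 1 : ℤ)) * qInt (M - N) := by
    have := qInt_add (N + 1) (M - N)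
    have hMN : N + 1 + (M - N) = M + 1 := by omega
    rw [hMN] at this
    rw [this]
    have : ((M - N : ℕ) : ℤ) = (M : ℤ) - N := by omega
    rw [this]
    push_cast
    ring
  have hF : qFact (N + 1) = qFact N * qInt (N + 1) := Finset.prod_range_succ _ _
  unfold qBinom
  rw [hP1, hP2, hqI, hF]
  have h1 : qFact N ≠ 0 := qFact_ne_zero N
  have h2 : qInt (N + 1) ≠ 0 := qInt_ne_zero (N + 1) (Nat.le_add_left 1 N)
  field_simp
  ring

lemma qBinom_zero (m : ℕ) : qBinom m 0 = 1 := by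
  simp [qBinom, qFact]

/-- If `A·[m+t choose n] ∈ ℚ[p^{±1},q^{±1}]` for `t = 1,…,n+1`, then
`A ∈ ℚ[p^{±1},q^{±1}]`. -/
theorem mem_laurent_of_mul_qBinom (A : Kpq) (m n : ℕ) (hmn : n ≤ m)
    (h : ∀ t ∈ Finset.Icc 1 (n + 1), A * qBinom (m + t) n ∈ LaurentA) :
    A ∈ LaurentA := by
  induction n with
  | zero =>
    have := h 1 (by simp)
    rwa [qBinom_zero, mul_one] at this
  | succ n ih =>
    refine ih (le_of_lt hmn) fun t ht => ?_
    obtain ⟨ht1, ht2⟩ := Finset.mem_Icc.mp ht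
    have hpas := qBinom_pascal (m + t) n (by omega)
    have key : A * qBinom (m + t) n =
        qv ^ ((n : ℤ) - (m + t)) * (A * qBinom (m + t + 1) (n + 1))
        - qv ^ ((n : ℤ) - (m + t) - (n + 1)) * (A * qBinom (m + t) (n + 1)) := by
      have e1 : qv ^ ((n : ℤ) - (m + t)) * qv ^ (((m + t : ℕ) : ℤ) - n) = 1 := by
        rw [← zpow_add₀ qv_ne_zero,
          show ((n : ℤ) - (m + t)) + (((m + t : ℕ) : ℤ) - n) = 0 by push_cast; ring, zpow_zero]
      have e2 : qv ^ ((n : ℤ) - (m + t)) * qv ^ (-((n : ℤ) + 1)) = qv ^ ((n : ℤ) - (m + t) - (n + 1)) := by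
        rw [← zpow_add₀ qv_ne_zero,
          show ((n : ℤ) - (m + t)) + (-((n : ℤ) + 1)) = (n : ℤ) - (m + t) - (n + 1) by ring]
      rw [hpas]
      linear_combination (-(A * qBinom (m + t) n)) * e1 - (A * qBinom (m + t) (n + 1)) * e2
    rw [key]
    have h1 := h (t + 1) (Finset.mem_Icc.mpr ⟨by omega, by omega⟩)
    have h2 := h t (Finset.mem_Icc.mpr ⟨ht1, by omega⟩)
    rw [show m + (t + 1) = m + t + 1 by ring] at h1
    exact sub_mem (mul_mem (qv_zpow_mem _) h1) (mul_mem (qv_zpow_mem _) h2)
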